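/- Let φ ∈ {f,g,h} and let u be an infinite word over Σ₃. If φ(u) is rich, then u is rich. -/

import Mathlib

/-- The morphism `f` with f(0)=0, f(1)=01, f(2)=011. -/
def fm : List (Fin 3) → List (Fin 2) :=
  fun w => w.flatMap (fun a => if a = 0 then [0] else if a = 1 then [0,1] else [0,1,1])

/-- The morphism `g` with g(0)=011, g(1)=0121, g(2)=012121. -/
def gm : List (Fin 3) → List (Fin 3) :=
  fun w => w.flatMap (fun a => if a = 0 then [0,1,1] else if a = 1 then [0,1,2,1] else [0,1,2,1,2,1])

/-- The morphism `h` with h(0)=01, h(1)=02, h(2)=022. -/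
def hm : List (Fin 3) → List (Fin 3) :=
  fun w => w.flatMap (fun a => if a = 0 then [0,1] else if a = 1 then [0,2] else [0,2,2])

/-- A finite word of length n is rich if it contains exactly n distinct
nonempty palindromic factors. -/
def Rich {α : Type*} (w : List α) : Prop :=
  {p : List α | p ≠ [] ∧ p.reverse = p ∧ p <:+: w}.ncard = w.length

/-- `l` is a (finite) factor of the infinite word `w`. -/
def FactorOf {α : Type*} (l : List α) (w : ℕ → α) : Prop :=
  ∃ i : ℕ, ∀ k : ℕ, (h : k < l.length) → l.get ⟨k, h⟩ = w (i + k)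

/-- An infinite word is rich if all of its finite factors are rich. -/
def RichInf {α : Type*} (w : ℕ → α) : Prop :=
  ∀ l : List α, FactorOf l w → Rich l

/-- `y` is the image of the infinite word `u` under the morphism `φ`
(given as a map on finite words): the image of every finite prefix of `u`
is a prefix of `y`. -/
def IsImage {α β : Type*} (φ : List α → List β) (u : ℕ → α) (y : ℕ → β) : Prop :=
  ∀ n : ℕ, ∀ k : ℕ, (h : k < (φ (List.ofFn (fun i : Fin n => u i))).length) →
    (φ (List.ofFn (fun i : Fin n => u i))).get ⟨k, h⟩ = y k

namespace RichAux

variable {α : Type*} {β : Type*}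

def palFactors (w : List α) : Set (List α) := {p | p ≠ [] ∧ p.reverse = p ∧ p <:+: w}

lemma rich_iff (w : List α) : Rich w ↔ (palFactors w).ncard = w.length := Iff.rfl

lemma palFactors_finite (w : List α) : (palFactors w).Finite := by
  apply Set.Finite.subset (w.sublists.finite_toSet)
  rintro p ⟨-, -, hp⟩
  simpa [List.mem_sublists] using hp.sublist

lemma palFactors_mono {v w : List α} (h : v <:+: w) : palFactors v ⊆ palFactors w := by
  rintro p ⟨h1, h2, h3⟩
  exact ⟨h1, h2, h3.trans h⟩

lemma palFactors_nil : palFactors ([] : List α) = ∅ := by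
  ext p
  simp only [palFactors, Set.mem_setOf_eq, Set.mem_empty_iff_false, iff_false, not_and]
  rintro h1 h2 ⟨x, z, hxz⟩
  simp only [List.append_eq_nil_iff] at hxz
  exact h1 hxz.1.2

/-- a palindromic factor of `w ++ [a]` that is not a factor of `w` is a suffix. -/
lemma new_pal_is_suffix {w p : List α} {a : α} (hp : p <:+: w ++ [a]) (hnp : ¬ p <:+: w) :
    p <:+ w ++ [a] := by
  obtain ⟨x, z, hxz⟩ := hp
  rcases List.eq_nil_or_concat z with rfl | ⟨z', c, rfl⟩
  · exact ⟨x, by simpa using hxz⟩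
  · exfalso
    apply hnp
    rw [List.concat_eq_append, show x ++ p ++ (z' ++ [c]) = (x ++ p ++ z') ++ [c] by simp] at hxz
    have := List.append_inj_left' hxz (by simp)
    exact ⟨x, z', by simpa using this⟩

/-- two distinct suffixes: shorter one is a suffix of the longer -/
lemma suffix_of_suffix_le {p q v : List α} (hp : p <:+ v) (hq : q <:+ v)
    (hlen : p.length ≤ q.length) : p <:+ q := by
  rcases List.suffix_or_suffix_of_suffix hp hq with h | h
  · exact h
  · have := h.length_le
    have : q.length = p.length := le_antisymm this hlen
    rw [List.IsSuffix.eq_of_length h this]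

lemma pal_suffix_infix_dropLast {p q v : List α} (hpal : p.reverse = p)
    (hqpal : q.reverse = q) (hp : p <:+ q) (hne : p ≠ q) (hq : q <:+: v) :
    p <:+: v.dropLast := by
  obtain ⟨r, hr⟩ := hp
  have hrne : r ≠ [] := by rintro rfl; simp at hr; exact hne hr
  have hq' : q = p ++ r.reverse := by
    conv_lhs => rw [← hqpal, ← hr]
    rw [List.reverse_append, hpal]
  obtain ⟨x, z, hxz⟩ := hq
  have hv : v = x ++ p ++ (r.reverse ++ z) := by
    rw [← hxz, hq']; simp
  have htne : r.reverse ++ z ≠ [] := by simp [hrne]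
  rw [hv, show x ++ p ++ (r.reverse ++ z) = (x ++ p) ++ (r.reverse ++ z) by simp,
    List.dropLast_append_of_ne_nil htne]
  exact ⟨x, (r.reverse ++ z).dropLast, by simp⟩

/-- At most one new palindromic factor when appending a letter. -/
lemma ncard_palFactors_snoc (w : List α) (a : α) :
    (palFactors (w ++ [a])).ncard ≤ (palFactors w).ncard + 1 := by
  classical
  set D := palFactors (w ++ [a]) \ palFactors w with hD
  have hsub : D.Subsingleton := by
    rintro p ⟨⟨hp1, hp2, hp3⟩, hp4⟩ q ⟨⟨hq1, hq2, hq3⟩, hq4⟩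
    have hnp : ¬ p <:+: w := fun h => hp4 ⟨hp1, hp2, h⟩
    have hnq : ¬ q <:+: w := fun h => hq4 ⟨hq1, hq2, h⟩
    have hps := new_pal_is_suffix hp3 hnp
    have hqs := new_pal_is_suffix hq3 hnq
    by_contra hne
    rcases le_total p.length q.length with hle | hle
    · have hpq : p <:+ q := suffix_of_suffix_le hps hqs hle
      have := pal_suffix_infix_dropLast hp2 hq2 hpq hne hq3
      rw [List.dropLast_concat] at this
      exact hnp this
    · have hqp : q <:+ p := suffix_of_suffix_le hqs hps hle
      have := pal_suffix_infix_dropLast hq2 hp2 hqp (Ne.symm hne) hp3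
      rw [List.dropLast_concat] at this
      exact hnq this
  have hunion : palFactors (w ++ [a]) ⊆ palFactors w ∪ D := by
    intro p hp
    by_cases h : p ∈ palFactors w
    · exact Or.inl h
    · exact Or.inr ⟨hp, h⟩
  calc (palFactors (w ++ [a])).ncard ≤ (palFactors w ∪ D).ncard :=
        Set.ncard_le_ncard hunion (((palFactors_finite w)).union
          ((palFactors_finite (w ++ [a])).subset (Set.diff_subset)))
    _ ≤ (palFactors w).ncard + D.ncard := Set.ncard_union_le _ _
    _ ≤ (palFactors w).ncard + 1 := by
        gcongr
        rcases D.eq_empty_or_nonempty with h | ⟨x, hx⟩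
        · simp [h]
        · rw [hsub.eq_singleton_of_mem hx]; simp

lemma ncard_palFactors_append (w z : List α) :
    (palFactors (w ++ z)).ncard ≤ (palFactors w).ncard + z.length := by
  induction z using List.reverseRecOn with
  | nil => simp
  | append_singleton z a ih =>
    calc (palFactors (w ++ (z ++ [a]))).ncard
        = (palFactors ((w ++ z) ++ [a])).ncard := by rw [List.append_assoc]
      _ ≤ (palFactors (w ++ z)).ncard + 1 := ncard_palFactors_snoc _ _
      _ ≤ (palFactors w).ncard + z.length + 1 := by gcongr
      _ = (palFactors w).ncard + (z ++ [a]).length := by simp; ring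

lemma ncard_palFactors_le_length (w : List α) :
    (palFactors w).ncard ≤ w.length := by
  have := ncard_palFactors_append ([] : List α) w
  simpa [palFactors_nil] using this

lemma rich_of_prefix_rich {w z : List α} (h : Rich (w ++ z)) : Rich w := by
  rw [rich_iff] at h ⊢
  have h1 := ncard_palFactors_append w z
  have h2 := ncard_palFactors_le_length w
  rw [h] at *
  simp only [List.length_append] at *
  omega

lemma palFactors_reverse (w : List α) : palFactors w.reverse = palFactors w := by
  ext p
  constructor <;> rintro ⟨h1, h2, h3⟩
  · refine ⟨h1, h2, ?_⟩
    rw [← List.reverse_infix, h2] at h3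
    simpa using h3
  · refine ⟨h1, h2, ?_⟩
    rw [← List.reverse_infix] at h3 ⊢
    rw [h2]
    simpa using h3

lemma rich_reverse {w : List α} (h : Rich w) : Rich w.reverse := by
  rw [rich_iff] at h ⊢
  rw [palFactors_reverse]
  simpa using h

lemma rich_of_infix_rich {v w : List α} (hv : v <:+: w) (h : Rich w) : Rich v := by
  obtain ⟨x, z, hxz⟩ := hv
  have h1 : Rich (x ++ v) := rich_of_prefix_rich (z := z) (by rw [hxz]; exact h)
  have h2 : Rich (v.reverse ++ x.reverse) := by
    have := rich_reverse h1
    simpa using this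
  have h3 : Rich v.reverse := rich_of_prefix_rich h2
  have := rich_reverse h3
  simpa using this


lemma exists_lps {q : List α} (hq : q ≠ []) :
    ∃ t, t ≠ [] ∧ t.reverse = t ∧ t <:+ q ∧
      ∀ t', t' ≠ [] → t'.reverse = t' → t' <:+ q → t'.length ≤ t.length := by
  classical
  set S : Finset ℕ := (Finset.range (q.length + 1)).filter
    (fun n => n ≠ 0 ∧ (q.drop (q.length - n)).reverse = q.drop (q.length - n)) with hS
  have h1 : 1 ∈ S := by
    simp only [hS, Finset.mem_filter, Finset.mem_range]
    have hlen : 1 ≤ q.length := List.length_pos_iff.mpr hq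
    refine ⟨by omega, one_ne_zero, ?_⟩
    have hl1 : (q.drop (q.length - 1)).length = 1 := by
      rw [List.length_drop]; omega
    obtain ⟨a, ha⟩ := List.length_eq_one_iff.mp hl1
    rw [ha]; rfl
  have hSne : S.Nonempty := ⟨1, h1⟩
  have hnS := S.max'_mem hSne
  set n := S.max' hSne with hn
  simp only [hS, Finset.mem_filter, Finset.mem_range] at hnS
  obtain ⟨hlt, hn0, hpal⟩ := hnS
  refine ⟨q.drop (q.length - n), ?_, hpal, List.drop_suffix _ _, ?_⟩
  · intro h
    have := congrArg List.length h
    rw [List.length_drop] at this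
    simp at this
    omega
  · intro t' ht'ne ht'pal ht's
    obtain ⟨x, hx⟩ := ht's
    have hxlen : x.length = q.length - t'.length := by
      have := congrArg List.length hx; simp at this; omega
    have hdrop : q.drop (q.length - t'.length) = t' := by
      rw [← hxlen, ← hx, List.drop_left]
    have hlenle : t'.length ≤ q.length := by
      have := congrArg List.length hx; simp at this; omega
    have hpos : t'.length ≠ 0 := by
      intro h; exact ht'ne (List.length_eq_zero_iff.mp h)
    have ht'S : t'.length ∈ S := by
      simp only [hS, Finset.mem_filter, Finset.mem_range]
      exact ⟨by omega, hpos, by rw [hdrop]; exact ht'pal⟩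
    have hle := S.le_max' _ ht'S
    rw [List.length_drop]
    omega

lemma rich_of_new (l : List α)
    (H : ∀ p a, p ++ [a] <+: l →
      ∃ t, t ≠ [] ∧ t.reverse = t ∧ t <:+ p ++ [a] ∧ ¬ t <:+: p) :
    Rich l := by
  rw [rich_iff]
  induction l using List.reverseRecOn with
  | nil => simp [palFactors_nil]
  | append_singleton w a ih =>
    have hw : (palFactors w).ncard = w.length :=
      ih (fun p b hp => H p b (hp.trans (List.prefix_append _ _)))
    obtain ⟨t, ht1, ht2, ht3, ht4⟩ := H w a List.prefix_rfl
    have htmem : t ∈ palFactors (w ++ [a]) := ⟨ht1, ht2, ht3.isInfix⟩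
    have htnot : t ∉ palFactors w := fun h => ht4 h.2.2
    have hsubset : insert t (palFactors w) ⊆ palFactors (w ++ [a]) := by
      intro p hp
      rcases hp with rfl | hp
      · exact htmem
      · exact palFactors_mono (List.prefix_append w [a]).isInfix hp
    have hge : (palFactors w).ncard + 1 ≤ (palFactors (w ++ [a])).ncard := by
      rw [← Set.ncard_insert_of_notMem htnot (palFactors_finite w)]
      exact Set.ncard_le_ncard hsubset (palFactors_finite _)
    have hle := ncard_palFactors_snoc w a
    simp only [List.length_append, List.length_singleton]
    omega

lemma exists_bad_prefix {l : List α} (h : ¬ Rich l) :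
    ∃ p a t, p ++ [a] <+: l ∧ t ≠ [] ∧ t.reverse = t ∧ t <:+ p ++ [a] ∧
      (∀ t', t' ≠ [] → t'.reverse = t' → t' <:+ p ++ [a] → t'.length ≤ t.length) ∧
      t <:+: p := by
  by_contra hcon
  apply h
  apply rich_of_new
  intro p a hpa
  obtain ⟨t, ht1, ht2, ht3, hmax⟩ := exists_lps (q := p ++ [a]) (by simp)
  exact ⟨t, ht1, ht2, ht3, fun hinf =>
    hcon ⟨p, a, t, hpa, ht1, ht2, ht3, hmax, hinf⟩⟩

lemma lps_unioccurrent_of_rich {F p : List α} {a : α} (hF : Rich F) (hpre : p ++ [a] <+: F)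
    {t : List α} (ht1 : t ≠ []) (ht2 : t.reverse = t) (ht3 : t <:+ p ++ [a])
    (hmax : ∀ t', t' ≠ [] → t'.reverse = t' → t' <:+ p ++ [a] → t'.length ≤ t.length)
    (hocc : t <:+: p) : False := by
  have hsub : palFactors (p ++ [a]) ⊆ palFactors p := by
    rintro r ⟨hr1, hr2, hr3⟩
    refine ⟨hr1, hr2, ?_⟩
    by_cases hrp : r <:+: p
    · exact hrp
    have hrs : r <:+ p ++ [a] := new_pal_is_suffix hr3 hrp
    have hrlen := hmax r hr1 hr2 hrs
    have hrt : r <:+ t := suffix_of_suffix_le hrs ht3 hrlen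
    by_cases hre : r = t
    · rw [hre]; exact hocc
    · have hpre2 : r.reverse <+: t.reverse := List.reverse_prefix.mpr hrt
      rw [hr2, ht2] at hpre2
      exact hpre2.isInfix.trans hocc
  have h1 : (palFactors (p ++ [a])).ncard ≤ p.length :=
    le_trans (Set.ncard_le_ncard hsub (palFactors_finite p))
      (ncard_palFactors_le_length p)
  have h2 : Rich (p ++ [a]) := by
    obtain ⟨z, hz⟩ := hpre
    exact rich_of_prefix_rich (z := z) (by rw [hz]; exact hF)
  rw [rich_iff] at h2
  simp only [List.length_append, List.length_singleton] at h2
  omega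


section Morphism

variable (b0 : β) (s : α → List β)

def phi (w : List α) : List β := w.flatMap (fun a => b0 :: s a)

lemma phi_nil : phi b0 s [] = [] := rfl

lemma phi_cons (a : α) (w : List α) :
    phi b0 s (a :: w) = (b0 :: s a) ++ phi b0 s w := by
  simp [phi]

lemma phi_append (x y : List α) :
    phi b0 s (x ++ y) = phi b0 s x ++ phi b0 s y := by
  simp [phi]

lemma phi_snoc_cons (z : List α) : ∃ R, phi b0 s z ++ [b0] = b0 :: R := by
  cases z with
  | nil => exact ⟨[], rfl⟩
  | cons c z => exact ⟨s c ++ phi b0 s z ++ [b0], by simp [phi_cons]⟩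

variable {b0 s}

lemma phi_reverse (hs : ∀ a, (s a).reverse = s a) (w : List α) :
    (phi b0 s w ++ [b0]).reverse = phi b0 s w.reverse ++ [b0] := by
  induction w with
  | nil => simp [phi_nil]
  | cons a w ih =>
    rw [phi_cons, show ((b0 :: s a) ++ phi b0 s w) ++ [b0]
        = (b0 :: s a) ++ (phi b0 s w ++ [b0]) by simp,
      List.reverse_append, ih,
      show (a :: w).reverse = w.reverse ++ [a] by simp,
      phi_append]
    simp [phi_cons, phi_nil, hs a]

lemma phi_pal (hs : ∀ a, (s a).reverse = s a) {t : List α} (ht : t.reverse = t) :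
    (phi b0 s t ++ [b0]).reverse = phi b0 s t ++ [b0] := by
  rw [phi_reverse hs, ht]

lemma phi_inj (hb : ∀ a, b0 ∉ s a) (hinj : Function.Injective s) :
    ∀ x y : List α, phi b0 s x = phi b0 s y → x = y := by
  intro x
  induction x with
  | nil =>
    intro y h
    cases y with
    | nil => rfl
    | cons c y => simp [phi_nil, phi_cons] at h
  | cons a x ih =>
    intro y h
    cases y with
    | nil => simp [phi_nil, phi_cons] at h
    | cons c y =>
      rw [phi_cons, phi_cons, List.cons_append, List.cons_append,
        List.cons.injEq] at h
      obtain ⟨-, h⟩ := h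
      have key : ∀ (a c : α) (X Y : List α), s a ++ phi b0 s X = s c ++ phi b0 s Y →
          (s a).length ≤ (s c).length → s a = s c := by
        intro a c X Y h hle
        have h1 : s a <+: s c := by
          rcases List.prefix_or_prefix_of_prefix
            (List.prefix_append (s a) (phi b0 s X))
            (h ▸ List.prefix_append (s c) (phi b0 s Y)) with h' | h'
          · exact h'
          · have he : s c = s a := h'.eq_of_length (le_antisymm h'.length_le hle)
            rw [he]
        obtain ⟨r, hr⟩ := h1
        rw [← hr, List.append_assoc] at h
        have h2 : phi b0 s X = r ++ phi b0 s Y := List.append_cancel_left h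
        cases r with
        | nil => simp [← hr]
        | cons d r' =>
          exfalso
          cases X with
          | nil => simp [phi_nil] at h2
          | cons a' X' =>
            rw [phi_cons] at h2
            simp only [List.cons_append, List.cons.injEq] at h2
            have hd : d = b0 := h2.1.symm
            apply hb c
            rw [← hr, hd]
            simp
      have hsac : s a = s c := by
        rcases le_total (s a).length (s c).length with hle | hle
        · exact key a c x y h hle
        · exact (key c a y x h.symm hle).symm
      have hac : a = c := hinj hsac
      rw [hsac] at h
      have := List.append_cancel_left h
      rw [ih y this, hac]

lemma phi_suffix {t q : List α} (h : t <:+ q) :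
    phi b0 s t ++ [b0] <:+ phi b0 s q ++ [b0] := by
  obtain ⟨x, hx⟩ := h
  exact ⟨phi b0 s x, by rw [← hx, phi_append]; simp⟩

lemma phi_length_mono {t q : List α} (h : t <:+ q) :
    (phi b0 s t).length ≤ (phi b0 s q).length := by
  obtain ⟨x, hx⟩ := h
  rw [← hx, phi_append]
  simp

lemma phi_infix {t p : List α} (h : t <:+: p) :
    phi b0 s t ++ [b0] <:+: phi b0 s p ++ [b0] := by
  obtain ⟨x, z, hxz⟩ := h
  obtain ⟨R, hR⟩ := phi_snoc_cons b0 s z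
  refine ⟨phi b0 s x, R, ?_⟩
  rw [← hxz, phi_append, phi_append]
  rw [show phi b0 s x ++ (phi b0 s t ++ [b0]) ++ R
      = phi b0 s x ++ phi b0 s t ++ (phi b0 s z ++ [b0]) by rw [hR]; simp]
  simp

lemma phi_suffix_boundary (hb : ∀ a, b0 ∉ s a) :
    ∀ (q : List α) (T : List β), T <:+ phi b0 s q ++ [b0] → T.head? = some b0 →
    ∃ t', t' <:+ q ∧ T = phi b0 s t' ++ [b0] := by
  intro q
  induction q with
  | nil =>
    intro T hT hhead
    rw [phi_nil, List.nil_append] at hT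
    obtain ⟨x, hx⟩ := hT
    cases T with
    | nil => simp at hhead
    | cons d T' =>
      have hx0 : x = [] := by
        have hlen := congrArg List.length hx
        simp only [List.length_append, List.length_cons, List.length_singleton,
          List.length_nil] at hlen
        exact List.eq_nil_of_length_eq_zero (by omega)
      subst hx0
      simp only [List.nil_append, List.cons.injEq] at hx
      exact ⟨[], List.nil_suffix, by simp [phi_nil, hx.1, hx.2]⟩
  | cons a q ih =>
    intro T hT hhead
    rw [phi_cons, List.append_assoc] at hT
    rcases List.suffix_or_suffix_of_suffix hT
      (List.suffix_append (b0 :: s a) (phi b0 s q ++ [b0])) with h | h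
    · obtain ⟨t', ht', hT'⟩ := ih T h hhead
      exact ⟨t', ht'.trans (List.suffix_cons a q), hT'⟩
    · obtain ⟨r, hr⟩ := h
      obtain ⟨x, hx⟩ := hT
      have hrX : x ++ r = b0 :: s a := by
        have h1 : (x ++ r) ++ (phi b0 s q ++ [b0])
            = (b0 :: s a) ++ (phi b0 s q ++ [b0]) := by
          rw [List.append_assoc, hr, hx]
        exact List.append_cancel_right h1
      cases r with
      | nil =>
        refine ⟨q, List.suffix_cons a q, ?_⟩
        rw [← hr]; simp
      | cons d r' =>
        have hd : d = b0 := by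
          rw [← hr] at hhead
          simp at hhead
          exact hhead
        by_cases hlen : (d :: r').length = (b0 :: s a).length
        · have hxnil : x = [] := by
            have hlenX := congrArg List.length hrX
            simp only [List.length_append, List.length_cons] at hlenX hlen
            exact List.eq_nil_of_length_eq_zero (by omega)
          subst hxnil
          simp only [List.nil_append] at hrX
          refine ⟨a :: q, List.suffix_refl _, ?_⟩
          rw [← hr, hrX, phi_cons]
          simp
        · exfalso
          have hrs : (d :: r') <:+ s a := by
            apply suffix_of_suffix_le (v := b0 :: s a)
            · exact ⟨x, hrX⟩
            · exact List.suffix_cons b0 (s a)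
            · have hlenX := congrArg List.length hrX
              simp only [List.length_append, List.length_cons] at hlenX hlen ⊢
              omega
          apply hb a
          rw [← hd]
          exact hrs.sublist.subset (by simp)

lemma transfer (hs : ∀ a, (s a).reverse = s a) (hb : ∀ a, b0 ∉ s a)
    (hinj : Function.Injective s) {l : List α}
    (hF : Rich (phi b0 s l ++ [b0])) : Rich l := by
  by_contra hl
  obtain ⟨p, a, t, hpre, ht1, ht2, ht3, hmax, hocc⟩ := exists_bad_prefix hl
  set dQ := phi b0 s (p ++ [a]) with hdQ
  obtain ⟨z, hz⟩ := hpre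
  obtain ⟨R, hR⟩ := phi_snoc_cons b0 s z
  have hpref : dQ ++ [b0] <+: phi b0 s l ++ [b0] := by
    refine ⟨R, ?_⟩
    rw [← hz, phi_append, hdQ]
    rw [show phi b0 s (p ++ [a]) ++ [b0] ++ R
        = phi b0 s (p ++ [a]) ++ (b0 :: R) by simp]
    rw [← hR]
    simp
  apply lps_unioccurrent_of_rich hF hpref (t := phi b0 s t ++ [b0])
    (by simp) (phi_pal hs ht2) (phi_suffix ht3) ?_ ?_
  · -- maximality
    intro t' ht'ne ht'pal ht'suf
    have hlast : t'.getLast? = some b0 := by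
      obtain ⟨x, hx⟩ := ht'suf
      have h1 : t'.getLast? = (x ++ t').getLast? :=
        (List.getLast?_append_of_ne_nil _ ht'ne).symm
      rw [hx] at h1
      rw [h1, List.getLast?_append_of_ne_nil _ (by simp : ([b0] : List β) ≠ [])]
      simp
    have hhead : t'.head? = some b0 := by
      rw [← ht'pal, List.head?_reverse]
      exact hlast
    obtain ⟨w', hw', hTw⟩ := phi_suffix_boundary hb (p ++ [a]) t' ht'suf hhead
    have hw'pal : w'.reverse = w' := by
      apply phi_inj hb hinj
      have h1 : phi b0 s w'.reverse ++ [b0] = phi b0 s w' ++ [b0] := by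
        rw [← phi_reverse hs, ← hTw, ht'pal, hTw]
      exact List.append_cancel_right h1
    cases w' with
    | nil =>
      rw [hTw]
      simp [phi_nil]
    | cons b w'' =>
      have hlen : (b :: w'').length ≤ t.length :=
        hmax _ (by simp) hw'pal hw'
      have hwt : (b :: w'') <:+ t := suffix_of_suffix_le hw' ht3 hlen
      have := phi_length_mono (b0 := b0) (s := s) hwt
      rw [hTw]
      simp only [List.length_append]
      omega
  · -- occurrence in dQ
    have h1 : phi b0 s t ++ [b0] <:+: phi b0 s p ++ [b0] := phi_infix hocc
    have h2 : phi b0 s p ++ [b0] <+: dQ := by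
      refine ⟨s a, ?_⟩
      rw [hdQ, phi_append, phi_cons, phi_nil]
      simp
    exact h1.trans h2.isInfix

end Morphism


lemma factorOf_of_eq {y : ℕ → β} {M : List β} (x L z : List β) (hM : M = x ++ (L ++ z))
    (hy : ∀ k : ℕ, (h : k < M.length) → M.get ⟨k, h⟩ = y k) : FactorOf L y := by
  refine ⟨x.length, fun k hk => ?_⟩
  have hlen : x.length + k < M.length := by
    rw [hM]; simp only [List.length_append]; omega
  have h1 := hy (x.length + k) hlen
  simp only [List.get_eq_getElem] at h1 ⊢
  rw [← h1]
  subst hM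
  rw [List.getElem_append_right (by omega : x.length ≤ x.length + k)]
  have hidx : x.length + k - x.length = k := by omega
  simp only [hidx]
  rw [List.getElem_append_left hk]

lemma main_glue {β : Type*} {b0 : β} {s : Fin 3 → List β}
    (hs : ∀ a, (s a).reverse = s a) (hb : ∀ a, b0 ∉ s a)
    (hinj : Function.Injective s)
    (φ : List (Fin 3) → List β) (hφ : ∀ w, φ w = phi b0 s w)
    (u : ℕ → Fin 3) (y : ℕ → β) (him : IsImage φ u y) (hy : RichInf y) :
    RichInf u := by
  intro l hl
  apply transfer hs hb hinj (l := l)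
  apply hy
  obtain ⟨i, hi⟩ := hl
  set n := i + l.length + 1 with hn
  set Pl := List.ofFn (fun j : Fin n => u j) with hPl
  have hPllen : Pl.length = n := by simp [hPl, hn]
  have hgetPl : ∀ k (h : k < Pl.length), Pl[k] = u k := by
    intro k h
    simp only [hPl, List.getElem_ofFn]
  have hsplit : Pl = Pl.take i ++ (l ++ [u (i + l.length)]) := by
    have htklen : (Pl.take i).length = i := by
      simp only [List.length_take, hPllen]; omega
    apply List.ext_getElem
    · simp only [List.length_append, htklen, hPllen, List.length_cons,
        List.length_nil]
      omega
    · intro k h1 h2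
      rw [hgetPl k h1]
      by_cases hk1 : k < (Pl.take i).length
      · rw [List.getElem_append_left hk1, List.getElem_take]
        exact (hgetPl k (by rw [hPllen]; rw [htklen] at hk1; omega)).symm
      · rw [List.getElem_append_right (le_of_not_gt hk1)]
        by_cases hk2 : k - (Pl.take i).length < l.length
        · rw [List.getElem_append_left hk2]
          have h3 := hi (k - (Pl.take i).length) hk2
          simp only [List.get_eq_getElem] at h3
          rw [h3]
          congr 1
          rw [htklen] at *
          omega
        · rw [List.getElem_append_right (le_of_not_gt hk2)]
          have hidx : k - (Pl.take i).length - l.length = 0 := by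
            rw [htklen] at *
            rw [hPllen] at h1
            omega
          simp only [hidx, List.getElem_cons_zero]
          congr 1
          rw [htklen] at *
          rw [hPllen] at h1
          omega
  apply factorOf_of_eq (M := φ Pl) (phi b0 s (Pl.take i))
    (phi b0 s l ++ [b0]) (s (u (i + l.length)))
  · rw [hφ]
    conv_lhs => rw [hsplit]
    rw [phi_append, phi_append, phi_cons, phi_nil]
    simp
  · intro k h
    exact him n k h

end RichAux

theorem rich_preimage_infinite (u : ℕ → Fin 3) :
    (∀ y : ℕ → Fin 2, IsImage fm u y → RichInf y → RichInf u) ∧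
    (∀ y : ℕ → Fin 3, IsImage gm u y → RichInf y → RichInf u) ∧
    (∀ y : ℕ → Fin 3, IsImage hm u y → RichInf y → RichInf u) := by
  refine ⟨fun y him hy => ?_, fun y him hy => ?_, fun y him hy => ?_⟩
  · exact RichAux.main_glue (b0 := (0 : Fin 2))
      (s := fun a => if a = 0 then [] else if a = 1 then [1] else [1,1])
      (by decide) (by decide) (by decide) fm
      (fun w => by
        show w.flatMap _ = w.flatMap _
        congr 1
        funext a
        fin_cases a <;> rfl) u y him hy
  · exact RichAux.main_glue (b0 := (0 : Fin 3))
      (s := fun a => if a = 0 then [1,1] else if a = 1 then [1,2,1] else [1,2,1,2,1])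
      (by decide) (by decide) (by decide) gm
      (fun w => by
        show w.flatMap _ = w.flatMap _
        congr 1
        funext a
        fin_cases a <;> rfl) u y him hy
  · exact RichAux.main_glue (b0 := (0 : Fin 3))
      (s := fun a => if a = 0 then [1] else if a = 1 then [2] else [2,2])
      (by decide) (by decide) (by decide) hm
      (fun w => by
        show w.flatMap _ = w.flatMap _
        congr 1
        funext a
        fin_cases a <;> rfl) u y him hy
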